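/- If C = ∅ and A is nonempty (so some avoider set is empty) and K ≥ 2, then White has a winning strategy in Paintbucket on G_K(∅, A) when Black moves first. -/

import Mathlib

/-- A Paintbucket position: a colored graph on vertex type `V`, with a finite
set of live vertices, a coloring (`true` = black), and a boolean adjacency. -/
structure PB (V : Type) where
  verts : Finset V
  black : V → Bool
  adj : V → V → Bool

namespace PB

variable {V : Type} [DecidableEq V]

/-- The neighbors of `v` among the live vertices. -/
def nbrs (P : PB V) (v : V) : Finset V :=
  P.verts.filter fun w => P.adj v w = true

/-- The move of player `p` (`true` = Black) at vertex `v`: delete the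
neighbors of `v`, recolor `v` with the mover's color, and connect `v` to all
former neighbors of the deleted vertices. -/
def move (p : Bool) (P : PB V) (v : V) : PB V :=
  let del := P.nbrs v
  let vs := insert v (P.verts \ del)
  { verts := vs
    black := fun x => if x = v then p else P.black x
    adj := fun x y =>
      decide (x ∈ vs) && decide (y ∈ vs) && decide (x ≠ y) &&
        (if x = v then P.adj v y || decide (∃ w ∈ del, P.adj w y = true)
         else if y = v then P.adj v x || decide (∃ w ∈ del, P.adj w x = true)
         else P.adj x y) }

/-- Player `p` may move at `v` iff the game is not over (at least two vertices
remain), `v` is live, and `v` has the opponent's color. -/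
def legal (p : Bool) (P : PB V) (v : V) : Prop :=
  1 < P.verts.card ∧ v ∈ P.verts ∧ P.black v = !p

instance (p : Bool) (P : PB V) (v : V) : Decidable (legal p P v) := by
  unfold legal; infer_instance

/-- `blackWinsAux n p P`: with fuel `n` and player `p` to move, Black wins
with optimal play. When the game is over, Black wins iff the remaining vertex
is black. -/
def blackWinsAux : ℕ → Bool → PB V → Prop
  | 0, _, P => ∃ v ∈ P.verts, P.black v = true
  | n + 1, p, P =>
    if P.verts.card ≤ 1 then ∃ v ∈ P.verts, P.black v = true
    else if p then ∃ v, legal true P v ∧ blackWinsAux n false (move true P v)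
    else ∀ v, legal false P v → blackWinsAux n true (move false P v)

/-- Black wins with `p` to move (fuel `P.verts.card` suffices since every move
in a connected position removes at least one vertex). -/
def blackWins (p : Bool) (P : PB V) : Prop :=
  blackWinsAux P.verts.card p P

/-- The coloring is proper: edges join vertices of different colors. -/
def Bipartite (P : PB V) : Prop :=
  ∀ x y, P.adj x y = true → P.black x ≠ P.black y

/-- Any two live vertices are joined by a path. -/
def Connected (P : PB V) : Prop :=
  ∀ x ∈ P.verts, ∀ y ∈ P.verts,
    Relation.ReflTransGen (fun a b => P.adj a b = true) x y

/-- A valid Paintbucket position: symmetric irreflexive adjacency supported on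
the live vertices, properly two-colored, and connected. -/
def Valid (P : PB V) : Prop :=
  (∀ x y, P.adj x y = P.adj y x) ∧
  (∀ x, P.adj x x = false) ∧
  (∀ x y, P.adj x y = true → x ∈ P.verts ∧ y ∈ P.verts) ∧
  P.Bipartite ∧ P.Connected

/-- Isomorphism of colored positions. -/
def Isom {W : Type} (P : PB V) (Q : PB W) : Prop :=
  ∃ f : V → W, Set.BijOn f ↑P.verts ↑Q.verts ∧
    (∀ x ∈ P.verts, Q.black (f x) = P.black x) ∧
    ∀ x ∈ P.verts, ∀ y ∈ P.verts, Q.adj (f x) (f y) = P.adj x y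

/-- Play out a list of (player, vertex) moves. -/
def run (P : PB V) : List (Bool × V) → PB V
  | [] => P
  | m :: ms => run (move m.1 P m.2) ms

/-- All moves in the list are legal when played in order. -/
def legalRun (P : PB V) : List (Bool × V) → Prop
  | [] => True
  | m :: ms => legal m.1 P m.2 ∧ legalRun (move m.1 P m.2) ms

end PB

/-- Vertices of the gadget graph `G_K(C, A)`: `v i`, `u i` for cells `i`,
`w k` for `k < K`, `t j k` for avoider-set indices `j`, and `r`, `s`. -/
inductive GV (ι κ : Type) (K : ℕ) where
  | v : ι → GV ι κ K
  | u : ι → GV ι κ K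
  | w : Fin K → GV ι κ K
  | t : κ → Fin K → GV ι κ K
  | r : GV ι κ K
  | s : GV ι κ K
  deriving DecidableEq, Fintype

/-- Colors in the gadget graph: `v i`, `w k`, `r` are black; `u i`, `t j k`, `s` are white. -/
def Gblack {ι κ : Type} {K : ℕ} : GV ι κ K → Bool
  | .v _ => true
  | .w _ => true
  | .r => true
  | _ => false

/-- Orientation of the edges of the gadget graph. -/
def Gedge {ι κ : Type} [DecidableEq ι] {K : ℕ} (A : κ → Finset ι) :
    GV ι κ K → GV ι κ K → Bool
  | .r, .u _ => true
  | .v i, .u i' => decide (i = i')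
  | .v _, .s => true
  | .t _ _, .r => true
  | .s, .r => true
  | .t _ _, .w _ => true
  | .s, .w _ => true
  | .v i, .t j _ => decide (i ∈ A j)
  | _, _ => false

/-- The gadget position `G_K(C, A)`, where the cells are the elements of `ι`
and the avoider sets are `A j` for `j : κ`. -/
def GPos {ι κ : Type} [Fintype ι] [Fintype κ] [DecidableEq ι] [DecidableEq κ]
    (A : κ → Finset ι) (K : ℕ) : PB (GV ι κ K) :=
  { verts := Finset.univ
    black := Gblack
    adj := fun x y => Gedge A x y || Gedge A y x }

section Aux

open PB

/-- With no cells, the gadget graph is complete bipartite. -/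
lemma Gadj_eq {ι κ : Type} [Fintype ι] [Fintype κ] [DecidableEq ι] [DecidableEq κ]
    [IsEmpty ι] (A : κ → Finset ι) (K : ℕ) (x y : GV ι κ K) :
    (GPos A K).adj x y = (Gblack x != Gblack y) := by
  cases x <;> cases y <;> first | exact isEmptyElim ‹ι› | rfl

lemma bwAux_small {V : Type} [DecidableEq V] (n : ℕ) (p : Bool) (P : PB V)
    (h : P.verts.card ≤ 1) :
    blackWinsAux n p P ↔ ∃ v ∈ P.verts, P.black v = true := by
  cases n with
  | zero => rfl
  | succ n => simp [blackWinsAux, h]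

end Aux

open PB in
/-- if `C = ∅`, the family of avoider sets is nonempty, and
`K ≥ 2`, then White wins Paintbucket on `G_K(∅, A)` when Black moves first. -/
theorem paintbucket_empty_cells
    {ι κ : Type} [Fintype ι] [Fintype κ] [DecidableEq ι] [DecidableEq κ]
    [IsEmpty ι] [Nonempty κ]
    (A : κ → Finset ι) (K : ℕ) (hK : 2 ≤ K) :
    ¬ blackWins true (GPos A K) := by
  classical
  intro hbw
  obtain ⟨j0⟩ := (inferInstance : Nonempty κ)
  have k0 : Fin K := ⟨0, by omega⟩
  set P := GPos A K with hPdef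
  have hcard2 : 2 ≤ P.verts.card := by
    have h1 : 1 < P.verts.card :=
      Finset.one_lt_card.2 ⟨GV.r, by simp [hPdef, GPos], GV.s, by simp [hPdef, GPos], by simp⟩
    omega
  obtain ⟨n, hn⟩ : ∃ n, P.verts.card = n + 1 + 1 := ⟨P.verts.card - 2, by omega⟩
  rw [blackWins, hn] at hbw
  rw [show blackWinsAux (n + 1 + 1) true P =
      if P.verts.card ≤ 1 then ∃ v ∈ P.verts, P.black v = true
      else ∃ v, legal true P v ∧ blackWinsAux (n+1) false (move true P v) from by
        simp [blackWinsAux]] at hbw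
  rw [if_neg (by omega)] at hbw
  obtain ⟨v, hleg, hbw⟩ := hbw
  have hv : Gblack v = false := by exact hleg.2.2
  set P₁ := move true P v with hP1
  have hadjP : ∀ y, P.adj v y = Gblack y := by
    intro y
    rw [hPdef, Gadj_eq, hv, Bool.false_bne]
  have hdel : P.nbrs v = Finset.univ.filter (fun y => Gblack y = true) := by
    ext y
    simp [PB.nbrs, hadjP, show P.verts = Finset.univ from rfl]
  have hverts1 : P₁.verts = Finset.univ.filter (fun y => Gblack y = false) := by
    rw [hP1]
    show insert v (P.verts \ P.nbrs v) = _
    rw [hdel]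
    ext y
    simp only [Finset.mem_insert, Finset.mem_sdiff, Finset.mem_filter, Finset.mem_univ,
      true_and, hPdef]
    show y = v ∨ y ∈ (Finset.univ : Finset (GV ι κ K)) ∧ ¬ Gblack y = true ↔ _
    constructor
    · rintro (rfl | ⟨_, h⟩)
      · exact hv
      · simpa using h
    · intro h
      exact Or.inr ⟨Finset.mem_univ _, by simp [h]⟩
  have hv1 : v ∈ P₁.verts := by rw [hverts1]; simp [hv]
  have hcard1 : 1 < P₁.verts.card := by
    refine Finset.one_lt_card.2 ⟨GV.s, ?_, GV.t j0 k0, ?_, by simp⟩ <;>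
      · rw [hverts1, Finset.mem_filter]; exact ⟨Finset.mem_univ _, rfl⟩
  have hb1 : P₁.black v = true := by
    rw [hP1]; show (if v = v then true else P.black v) = true; simp
  rw [show blackWinsAux (n + 1) false P₁ =
      if P₁.verts.card ≤ 1 then ∃ x ∈ P₁.verts, P₁.black x = true
      else ∀ w, legal false P₁ w → blackWinsAux n true (move false P₁ w) from by
        simp [blackWinsAux]] at hbw
  rw [if_neg (by omega)] at hbw
  have hleg1 : legal false P₁ v := ⟨hcard1, hv1, by simpa using hb1⟩
  have hbw2 := hbw v hleg1
  -- compute the neighbors of v in P₁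
  have hadj1 : ∀ y ∈ P₁.verts, y ≠ v → P₁.adj v y = true := by
    intro y hy hne
    have hgy : Gblack y = false := by
      rw [hverts1] at hy; simpa using hy
    rw [hP1]
    show (decide (v ∈ (move true P v).verts) && decide (y ∈ (move true P v).verts)
      && decide (v ≠ y) &&
      (if v = v then P.adj v y || decide (∃ w ∈ P.nbrs v, P.adj w y = true)
       else if y = v then P.adj v v || decide (∃ w ∈ P.nbrs v, P.adj w v = true)
       else P.adj v y)) = true
    rw [if_pos rfl]
    have hex : ∃ w ∈ P.nbrs v, P.adj w y = true := by
      refine ⟨GV.r, ?_, ?_⟩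
      · rw [hdel, Finset.mem_filter]; exact ⟨Finset.mem_univ _, rfl⟩
      · rw [hPdef, Gadj_eq]
        show (true != Gblack y) = true
        rw [hgy]
        rfl
    simp [hv1, hy, Ne.symm hne, hex, hP1]
    exact ⟨hv1, hy⟩
  have hnbrs1 : P₁.nbrs v = P₁.verts.erase v := by
    ext y
    simp only [PB.nbrs, Finset.mem_filter, Finset.mem_erase]
    constructor
    · rintro ⟨hy, hadjvy⟩
      refine ⟨?_, hy⟩
      rintro rfl
      rw [hP1] at hadjvy
      simp [PB.move] at hadjvy
    · rintro ⟨hne, hy⟩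
      exact ⟨hy, hadj1 y hy hne⟩
  have hverts2 : (move false P₁ v).verts = {v} := by
    show insert v (P₁.verts \ P₁.nbrs v) = {v}
    rw [hnbrs1]
    ext y
    simp only [Finset.mem_insert, Finset.mem_sdiff, Finset.mem_erase, Finset.mem_singleton]
    constructor
    · rintro (rfl | ⟨hy, h⟩)
      · rfl
      · by_contra hne
        exact h ⟨hne, hy⟩
    · rintro rfl
      exact Or.inl rfl
  rw [bwAux_small _ _ _ (by rw [hverts2]; simp)] at hbw2
  obtain ⟨x, hx, hxb⟩ := hbw2
  rw [hverts2, Finset.mem_singleton] at hx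
  subst hx
  have : (move false P₁ x).black x = false := by
    show (if x = x then false else P₁.black x) = false
    simp
  rw [this] at hxb
  exact Bool.false_ne_true hxb
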